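/- Fix integers l ≥ 2 and n ≥ 1, and nonzero vectors x₁,…,xₙ, y₁,…,yₙ ∈ ℝ^{l+1}. The following are equivalent: (i) there exist real l×(l+1) matrices A and B, each of rank l, such that for every i one has A·xᵢ ≠ 0 and A·xᵢ ∼ B·yᵢ; (ii) there exist real (l+1)×(l+2) matrices A′ and B′, each of rank l+1, nonzero vectors a′, b′ ∈ ℝ^{l+2} with A′·a′ = 0 and B′·b′ = 0, and nonzero vectors z₁,…,zₙ ∈ ℝ^{l+2} with zᵢ ∉ span{a′, b′} for every i, such that for every i one has A′·zᵢ ∼ xᵢ and B′·zᵢ ∼ yᵢ. -/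
import Mathlib


open Matrix

/-- `u ∼ v`: the vectors are equal up to a nonzero real scalar. -/
def Sim {k : ℕ} (u v : Fin k → ℝ) : Prop := ∃ c : ℝ, c ≠ 0 ∧ u = c • v

section AuxLemmas

open Submodule Module Function

private lemma mulVecLin_toMatrix'' {p q : ℕ} (f : (Fin q → ℝ) →ₗ[ℝ] (Fin p → ℝ)) :
    (LinearMap.toMatrix' f).mulVecLin = f := by
  rw [← Matrix.toLin'_apply', Matrix.toLin'_toMatrix']

private lemma mulVec_toMatrix' {p q : ℕ} (f : (Fin q → ℝ) →ₗ[ℝ] (Fin p → ℝ)) (v : Fin q → ℝ) :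
    (LinearMap.toMatrix' f).mulVec v = f v := by
  rw [← Matrix.mulVecLin_apply, mulVecLin_toMatrix'']

private lemma rank_toMatrix' {p q : ℕ} (f : (Fin q → ℝ) →ₗ[ℝ] (Fin p → ℝ)) :
    (LinearMap.toMatrix' f).rank = finrank ℝ (LinearMap.range f) := by
  rw [Matrix.rank, mulVecLin_toMatrix'']

private lemma rank_of_surj {p q : ℕ} (f : (Fin q → ℝ) →ₗ[ℝ] (Fin p → ℝ)) (h : Surjective f) :
    (LinearMap.toMatrix' f).rank = p := by
  rw [rank_toMatrix', LinearMap.range_eq_top.2 h, finrank_top, Module.finrank_fin_fun]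

private lemma surj_of_rank {p q : ℕ} (M : Matrix (Fin p) (Fin q) ℝ) (h : M.rank = p) :
    Surjective M.mulVecLin := by
  rw [← LinearMap.range_eq_top]
  apply Submodule.eq_top_of_finrank_eq
  rw [Module.finrank_fin_fun]; exact h

private lemma finrank_ker_of_rank {p q : ℕ} (M : Matrix (Fin p) (Fin q) ℝ) :
    M.rank + finrank ℝ (LinearMap.ker M.mulVecLin) = q := by
  have := LinearMap.finrank_range_add_finrank_ker M.mulVecLin
  rw [Module.finrank_fin_fun] at this
  exact this

private lemma ker_eq_span {k m : ℕ} (f : (Fin k → ℝ) →ₗ[ℝ] (Fin m → ℝ)) (v : Fin k → ℝ)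
    (hv : f v = 0) (h0 : v ≠ 0) (h1 : finrank ℝ (LinearMap.ker f) = 1) :
    LinearMap.ker f = span ℝ {v} := by
  symm
  apply Submodule.eq_of_le_of_finrank_le
  · exact (span_singleton_le_iff_mem _ _).2 hv
  · rw [h1, finrank_span_singleton h0]

private lemma surj_proj {m : ℕ} (w : Fin (m + 1) → ℝ) (hw : w ≠ 0) :
    ∃ g : (Fin (m + 1) → ℝ) →ₗ[ℝ] (Fin m → ℝ),
      Surjective g ∧ LinearMap.ker g = span ℝ {w} := by
  set p := span ℝ {w} with hp
  have h1 : finrank ℝ p = 1 := finrank_span_singleton hw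
  have hq : finrank ℝ ((Fin (m + 1) → ℝ) ⧸ p) = m := by
    have := Submodule.finrank_quotient_add_finrank p
    rw [h1, Module.finrank_fin_fun] at this; omega
  obtain ⟨e⟩ : Nonempty (((Fin (m + 1) → ℝ) ⧸ p) ≃ₗ[ℝ] (Fin m → ℝ)) :=
    FiniteDimensional.nonempty_linearEquiv_of_finrank_eq
      (by rw [hq, Module.finrank_fin_fun])
  refine ⟨e.toLinearMap ∘ₗ p.mkQ, e.surjective.comp (Submodule.mkQ_surjective p), ?_⟩
  rw [LinearMap.ker_comp, LinearEquiv.ker, Submodule.comap_bot, Submodule.ker_mkQ]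

private lemma avoid {k n : ℕ} (hk : 2 ≤ k) (u : Fin n → Fin k → ℝ) (hu : ∀ i, u i ≠ 0) :
    ∃ w₀ : Fin k → ℝ, w₀ ≠ 0 ∧ ∀ i, u i ∉ span ℝ {w₀} := by
  haveI : Nonempty (Fin k) := ⟨⟨0, by omega⟩⟩
  set p : Option (Fin n) → Subspace ℝ (Fin k → ℝ) :=
    fun o => o.elim ⊥ (fun i => span ℝ {u i}) with hpdef
  have hne : ∀ o, p o ≠ ⊤ := by
    rintro (_ | i) h
    · exact absurd h bot_ne_top
    · have h2 : finrank ℝ (span ℝ {u i}) = 1 := finrank_span_singleton (hu i)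
      rw [show p (some i) = span ℝ {u i} from rfl] at h
      rw [h, finrank_top, Module.finrank_fin_fun] at h2
      omega
  have hcov : (⋃ o, (p o : Set (Fin k → ℝ))) ≠ Set.univ := by
    intro h
    obtain ⟨o, ho⟩ := Subspace.exists_eq_top_of_iUnion_eq_univ h
    exact hne o ho
  obtain ⟨w₀, hw₀⟩ := Set.ne_univ_iff_exists_notMem _ |>.1 hcov
  simp only [Set.mem_iUnion, not_exists] at hw₀
  have h0 : w₀ ≠ 0 := by
    intro h
    exact hw₀ none (by simp [hpdef, h])
  refine ⟨w₀, h0, fun i hi => ?_⟩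
  rw [mem_span_singleton] at hi
  obtain ⟨c, hc⟩ := hi
  have hcne : c ≠ 0 := by rintro rfl; rw [zero_smul] at hc; exact hu i hc.symm
  apply hw₀ (some i)
  have hweq : w₀ = c⁻¹ • u i := by rw [← hc, smul_smul, inv_mul_cancel₀ hcne, one_smul]
  rw [hweq]
  exact SetLike.mem_coe.2 (smul_mem _ _ (mem_span_singleton_self _))

end AuxLemmas

section Main

open Submodule Module Function

/-- Theorem 2: two labeled point sets in ℙ^l have a common image in ℙ^{l-1}
iff they admit a common reconstruction from ℙ^{l+1}. -/
theorem common_image_iff_common_reconstruction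
    (l n : ℕ) (hl : 2 ≤ l) (hn : 1 ≤ n)
    (x y : Fin n → Fin (l + 1) → ℝ)
    (hx : ∀ i, x i ≠ 0) (hy : ∀ i, y i ≠ 0) :
    (∃ A B : Matrix (Fin l) (Fin (l + 1)) ℝ,
        A.rank = l ∧ B.rank = l ∧
        ∀ i, A.mulVec (x i) ≠ 0 ∧ Sim (A.mulVec (x i)) (B.mulVec (y i)))
    ↔
    (∃ (A' B' : Matrix (Fin (l + 1)) (Fin (l + 2)) ℝ)
        (a' b' : Fin (l + 2) → ℝ) (z : Fin n → Fin (l + 2) → ℝ),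
        A'.rank = l + 1 ∧ B'.rank = l + 1 ∧
        a' ≠ 0 ∧ b' ≠ 0 ∧
        A'.mulVec a' = 0 ∧ B'.mulVec b' = 0 ∧
        ∀ i, z i ≠ 0 ∧ z i ∉ Submodule.span ℝ {a', b'} ∧
          Sim (A'.mulVec (z i)) (x i) ∧ Sim (B'.mulVec (z i)) (y i)) := by
  constructor
  · rintro ⟨A, B, hA, hB, hP⟩
    set fA := A.mulVecLin with hfA
    set fB := B.mulVecLin with hfB
    have hkAfin : finrank ℝ (LinearMap.ker fA) = 1 := by
      have := finrank_ker_of_rank A; rw [hA, ← hfA] at this; omega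
    have hkBfin : finrank ℝ (LinearMap.ker fB) = 1 := by
      have := finrank_ker_of_rank B; rw [hB, ← hfB] at this; omega
    obtain ⟨a, haker, ha0⟩ : ∃ a, a ∈ LinearMap.ker fA ∧ a ≠ 0 := by
      apply Submodule.exists_mem_ne_zero_of_ne_bot
      intro h; rw [h, finrank_bot] at hkAfin; omega
    obtain ⟨b, hbker, hb0⟩ : ∃ b, b ∈ LinearMap.ker fB ∧ b ≠ 0 := by
      apply Submodule.exists_mem_ne_zero_of_ne_bot
      intro h; rw [h, finrank_bot] at hkBfin; omega
    have hfAa : fA a = 0 := LinearMap.mem_ker.1 haker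
    have hfBb : fB b = 0 := LinearMap.mem_ker.1 hbker
    have hkerA : LinearMap.ker fA = span ℝ {a} := ker_eq_span _ _ hfAa ha0 hkAfin
    have hkerB : LinearMap.ker fB = span ℝ {b} := ker_eq_span _ _ hfBb hb0 hkBfin
    have hsB : Surjective fB := surj_of_rank B hB
    obtain ⟨S, hS⟩ := fB.exists_rightInverse_of_surjective (LinearMap.range_eq_top.2 hsB)
    have hSapp : ∀ w, fB (S w) = w := fun w => LinearMap.congr_fun hS w
    set π : (Fin (l + 2) → ℝ) →ₗ[ℝ] (Fin (l + 1) → ℝ) :=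
      LinearMap.funLeft ℝ ℝ Fin.castSucc with hπ
    set lastc : (Fin (l + 2) → ℝ) →ₗ[ℝ] ℝ := LinearMap.proj (Fin.last (l + 1)) with hlastc
    set F : (Fin (l + 2) → ℝ) →ₗ[ℝ] (Fin (l + 1) → ℝ) :=
      (S ∘ₗ fA ∘ₗ π) + lastc.smulRight b with hFdef
    have hπsnoc : ∀ (u : Fin (l + 1) → ℝ) (c : ℝ), π (Fin.snoc u c) = u := by
      intro u c; funext i
      show (Fin.snoc u c : Fin (l + 2) → ℝ) (Fin.castSucc i) = u i
      rw [Fin.snoc_castSucc]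
    have hFapp : ∀ v, F v = S (fA (π v)) + v (Fin.last (l + 1)) • b := fun v => rfl
    set a' : Fin (l + 2) → ℝ := Pi.single (Fin.last (l + 1)) 1 with ha'
    set b' : Fin (l + 2) → ℝ := Fin.snoc a 0 with hb'
    have hπa' : π a' = 0 := by
      funext i
      show a' (Fin.castSucc i) = 0
      exact Pi.single_eq_of_ne (Fin.castSucc_lt_last i).ne 1
    have ha'0 : a' ≠ 0 := by
      intro h
      have := congrFun h (Fin.last (l + 1))
      rw [ha'] at this
      simp at this
    have hb'0 : b' ≠ 0 := by
      intro h
      apply ha0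
      funext i
      have := congrFun h (Fin.castSucc i)
      rw [hb'] at this
      simpa [Fin.snoc_castSucc] using this
    have hπb' : π b' = a := hπsnoc a 0
    have hb'last : b' (Fin.last (l + 1)) = 0 := Fin.snoc_last _ _
    have hFb' : F b' = 0 := by
      rw [hFapp, hπb', hfAa, map_zero, hb'last, zero_smul, add_zero]
    have key : ∀ i, ∃ t : ℝ, ∃ c : ℝ, c ≠ 0 ∧ S (fA (x i)) + t • b = c • y i := by
      intro i
      obtain ⟨c, hc0, hcx⟩ : ∃ c : ℝ, c ≠ 0 ∧ A.mulVec (x i) = c • B.mulVec (y i) := (hP i).2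
      have h1 : fB (S (fA (x i)) - c • y i) = 0 := by
        rw [map_sub, hSapp, _root_.map_smul]
        show A.mulVec (x i) - c • B.mulVec (y i) = 0
        rw [hcx, sub_self]
      obtain ⟨β, hβ⟩ := mem_span_singleton.1 (hkerB ▸ LinearMap.mem_ker.2 h1)
      refine ⟨-β, c, hc0, ?_⟩
      rw [neg_smul, hβ]
      abel
    choose t c hc0 hkey using key
    set z : Fin n → Fin (l + 2) → ℝ := fun i => Fin.snoc (x i) (t i) with hzdef
    have hkerF : LinearMap.ker F = span ℝ {b'} := by
      apply le_antisymm
      · intro v hv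
        rw [LinearMap.mem_ker, hFapp] at hv
        have h1 : fA (π v) = 0 := by
          have h := congrArg fB hv
          rw [map_add, hSapp, _root_.map_smul, hfBb, smul_zero, add_zero, map_zero] at h
          exact h
        have h2 : v (Fin.last (l + 1)) • b = 0 := by
          rw [h1, map_zero, zero_add] at hv; exact hv
        have h3 : v (Fin.last (l + 1)) = 0 := by
          rcases smul_eq_zero.1 h2 with h | h
          · exact h
          · exact absurd h hb0
        obtain ⟨α, hα⟩ := mem_span_singleton.1 (hkerA ▸ LinearMap.mem_ker.2 h1)
        apply mem_span_singleton.2 ⟨α, ?_⟩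
        funext j
        refine Fin.lastCases ?_ ?_ j
        · show α * b' (Fin.last (l + 1)) = v (Fin.last (l + 1))
          rw [hb'last, h3, mul_zero]
        · intro i
          show α * b' (Fin.castSucc i) = v (Fin.castSucc i)
          have h4 : b' (Fin.castSucc i) = a i := by rw [hb']; exact Fin.snoc_castSucc _ _ _
          have h5 : (α • a) i = (π v) i := congrFun hα i
          rw [h4]
          exact h5
      · rw [span_singleton_le_iff_mem]
        exact LinearMap.mem_ker.2 hFb'
    have hrankF : (LinearMap.toMatrix' F).rank = l + 1 := by
      rw [rank_toMatrix']
      have h := LinearMap.finrank_range_add_finrank_ker F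
      rw [hkerF, finrank_span_singleton hb'0, Module.finrank_fin_fun] at h
      omega
    refine ⟨LinearMap.toMatrix' π, LinearMap.toMatrix' F, a', b', z,
      rank_of_surj π (LinearMap.funLeft_surjective_of_injective ℝ ℝ _
        (Fin.castSucc_injective _)),
      hrankF, ha'0, hb'0, ?_, ?_, ?_⟩
    · rw [mulVec_toMatrix', hπa']
    · rw [mulVec_toMatrix', hFb']
    · intro i
      have hAz : (LinearMap.toMatrix' π).mulVec (z i) = x i := by
        rw [mulVec_toMatrix']; exact hπsnoc _ _
      have hFz : (LinearMap.toMatrix' F).mulVec (z i) = c i • y i := by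
        rw [mulVec_toMatrix', hFapp]
        have h1 : π (z i) = x i := hπsnoc _ _
        have h2 : z i (Fin.last (l + 1)) = t i := Fin.snoc_last _ _
        rw [h1, h2]
        exact hkey i
      refine ⟨?_, ?_, ⟨1, one_ne_zero, by rw [hAz, one_smul]⟩, ⟨c i, hc0 i, hFz⟩⟩
      · intro h
        apply hx i
        rw [← hAz, h, Matrix.mulVec_zero]
      · intro hmem
        obtain ⟨α, β, hab⟩ := mem_span_pair.1 hmem
        have h := congrArg π hab
        rw [map_add, _root_.map_smul, _root_.map_smul, hπa', smul_zero, zero_add, hπb'] at h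
        have h1 : π (z i) = x i := hπsnoc _ _
        rw [h1] at h
        apply (hP i).1
        show fA (x i) = 0
        rw [← h, _root_.map_smul, hfAa, smul_zero]
  · rintro ⟨A', B', a', b', z, hA', hB', ha0, hb0, hAa, hBb, hzp⟩
    set fA' := A'.mulVecLin with hfA'
    set fB' := B'.mulVecLin with hfB'
    have hsA : Surjective fA' := surj_of_rank A' hA'
    have hsB : Surjective fB' := surj_of_rank B' hB'
    have hkAfin : finrank ℝ (LinearMap.ker fA') = 1 := by
      have := finrank_ker_of_rank A'; rw [hA', ← hfA'] at this; omega
    have hkBfin : finrank ℝ (LinearMap.ker fB') = 1 := by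
      have := finrank_ker_of_rank B'; rw [hB', ← hfB'] at this; omega
    have hkerA : LinearMap.ker fA' = span ℝ {a'} := ker_eq_span _ _ hAa ha0 hkAfin
    have hkerB : LinearMap.ker fB' = span ℝ {b'} := ker_eq_span _ _ hBb hb0 hkBfin
    have hSimx : ∀ i, ∃ cc : ℝ, cc ≠ 0 ∧ A'.mulVec (z i) = cc • x i := fun i => (hzp i).2.2.1
    have hSimy : ∀ i, ∃ cc : ℝ, cc ≠ 0 ∧ B'.mulVec (z i) = cc • y i := fun i => (hzp i).2.2.2
    choose cx hcx0 hcx using hSimx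
    choose cy hcy0 hcy using hSimy
    set u : Fin n → Fin (l + 1) → ℝ := fun i => fA' (z i) with hu
    have hu0 : ∀ i, u i ≠ 0 := by
      intro i h
      have huA : u i = cx i • x i := hcx i
      rw [huA] at h
      exact smul_ne_zero (hcx0 i) (hx i) h
    set w : Fin (l + 1) → ℝ := fA' b' with hwdef
    have hw0 : ∃ w₀, w₀ ≠ 0 ∧ w ∈ span ℝ {w₀} ∧ ∀ i, u i ∉ span ℝ {w₀} := by
      by_cases hwz : w = 0
      · obtain ⟨w₀, h1, h2⟩ := avoid (k := l + 1) (by omega) u hu0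
        exact ⟨w₀, h1, by rw [hwz]; exact zero_mem _, h2⟩
      · refine ⟨w, hwz, mem_span_singleton_self _, fun i hi => ?_⟩
        obtain ⟨γ, hγ⟩ := mem_span_singleton.1 hi
        have h1 : fA' (z i - γ • b') = 0 := by
          rw [map_sub, _root_.map_smul]
          have h2 : γ • fA' b' = fA' (z i) := hγ
          rw [h2, sub_self]
        obtain ⟨δ, hδ⟩ := mem_span_singleton.1 (hkerA ▸ LinearMap.mem_ker.2 h1)
        refine (hzp i).2.1 (mem_span_pair.2 ⟨δ, γ, ?_⟩)
        rw [hδ]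
        abel
    obtain ⟨w₀, hw0ne, hwmem, hw0avoid⟩ := hw0
    obtain ⟨g, hgs, hgker⟩ := surj_proj w₀ hw0ne
    set f : (Fin (l + 2) → ℝ) →ₗ[ℝ] (Fin l → ℝ) := g ∘ₗ fA' with hfdef
    have hfsurj : Surjective f := hgs.comp hsA
    have hfa' : f a' = 0 := by
      show g (fA' a') = 0
      have h1 : fA' a' = 0 := hAa
      rw [h1, map_zero]
    have hfb' : f b' = 0 := by
      have hm : w ∈ LinearMap.ker g := hgker ▸ hwmem
      exact LinearMap.mem_ker.1 hm
    have hfz : ∀ i, f (z i) ≠ 0 := by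
      intro i h
      apply hw0avoid i
      rw [← hgker]
      exact LinearMap.mem_ker.2 h
    obtain ⟨RA, hRA⟩ := fA'.exists_rightInverse_of_surjective (LinearMap.range_eq_top.2 hsA)
    obtain ⟨RB, hRB⟩ := fB'.exists_rightInverse_of_surjective (LinearMap.range_eq_top.2 hsB)
    have hspanA : span ℝ {a'} ≤ LinearMap.ker f :=
      (span_singleton_le_iff_mem _ _).2 (LinearMap.mem_ker.2 hfa')
    have hspanB : span ℝ {b'} ≤ LinearMap.ker f :=
      (span_singleton_le_iff_mem _ _).2 (LinearMap.mem_ker.2 hfb')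
    have hCA : ∀ v, f (RA (fA' v)) = f v := by
      intro v
      have h1 : fA' (RA (fA' v) - v) = 0 := by
        rw [map_sub, show fA' (RA (fA' v)) = fA' v from LinearMap.congr_fun hRA (fA' v),
          sub_self]
      have h2 : f (RA (fA' v) - v) = 0 :=
        LinearMap.mem_ker.1 (hspanA (hkerA ▸ LinearMap.mem_ker.2 h1))
      rw [map_sub, sub_eq_zero] at h2
      exact h2
    have hDB : ∀ v, f (RB (fB' v)) = f v := by
      intro v
      have h1 : fB' (RB (fB' v) - v) = 0 := by
        rw [map_sub, show fB' (RB (fB' v)) = fB' v from LinearMap.congr_fun hRB (fB' v),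
          sub_self]
      have h2 : f (RB (fB' v) - v) = 0 :=
        LinearMap.mem_ker.1 (hspanB (hkerB ▸ LinearMap.mem_ker.2 h1))
      rw [map_sub, sub_eq_zero] at h2
      exact h2
    refine ⟨LinearMap.toMatrix' (f ∘ₗ RA), LinearMap.toMatrix' (f ∘ₗ RB), ?_, ?_, ?_⟩
    · apply rank_of_surj
      intro wv
      obtain ⟨v, hv⟩ := hfsurj wv
      exact ⟨fA' v, by rw [LinearMap.comp_apply, hCA v, hv]⟩
    · apply rank_of_surj
      intro wv
      obtain ⟨v, hv⟩ := hfsurj wv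
      exact ⟨fB' v, by rw [LinearMap.comp_apply, hDB v, hv]⟩
    · intro i
      have hxz : (cx i) • x i = fA' (z i) := (hcx i).symm
      have hyz : (cy i) • y i = fB' (z i) := (hcy i).symm
      have hAx : (LinearMap.toMatrix' (f ∘ₗ RA)).mulVec (x i) = (cx i)⁻¹ • f (z i) := by
        rw [mulVec_toMatrix', LinearMap.comp_apply]
        have hxeq : x i = (cx i)⁻¹ • fA' (z i) := by
          rw [← hxz, smul_smul, inv_mul_cancel₀ (hcx0 i), one_smul]
        rw [hxeq, _root_.map_smul, _root_.map_smul, hCA (z i)]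
      have hBy : (LinearMap.toMatrix' (f ∘ₗ RB)).mulVec (y i) = (cy i)⁻¹ • f (z i) := by
        rw [mulVec_toMatrix', LinearMap.comp_apply]
        have hyeq : y i = (cy i)⁻¹ • fB' (z i) := by
          rw [← hyz, smul_smul, inv_mul_cancel₀ (hcy0 i), one_smul]
        rw [hyeq, _root_.map_smul, _root_.map_smul, hDB (z i)]
      refine ⟨?_, (cx i)⁻¹ * cy i, mul_ne_zero (inv_ne_zero (hcx0 i)) (hcy0 i), ?_⟩
      · rw [hAx]
        exact smul_ne_zero (inv_ne_zero (hcx0 i)) (hfz i)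
      · rw [hAx, hBy, smul_smul, mul_assoc, mul_inv_cancel₀ (hcy0 i), mul_one]

end Main
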